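/- arXiv:2302.08858 — 6 statements merged into one kernel-verified Lean document; each statement's English description precedes it below -/
import Mathlib

section
/- For every integer N ≥ 2, every t ≥ 0, and every vector v ∈ ℝ^{N−1}, one has max_{1 ≤ n ≤ N−1} |(exp(t N² D^N) v)_n| ≤ max_{1 ≤ n ≤ N−1} |v_n|; that is, exp(t N² D^N) is a contraction for the supremum norm on ℝ^{N−1}. -/
/-- The finite-difference discretization of the Laplacian with homogeneous Dirichlet
boundary conditions: the `(N-1) × (N-1)` matrix with `-2` on the diagonal, `1` on the
sub- and super-diagonal, and `0` elsewhere. -/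
def DN (N : ℕ) : Matrix (Fin (N - 1)) (Fin (N - 1)) ℝ :=
  fun i j =>
    if (i : ℕ) = (j : ℕ) then -2
    else if (i : ℕ) + 1 = (j : ℕ) ∨ (j : ℕ) + 1 = (i : ℕ) then 1
    else 0

open NormedSpace Matrix
open scoped NNReal

/-- In a complete normed algebra over `ℝ`, `‖exp x‖ ≤ exp ‖x‖`. -/
lemma my_norm_exp_le {𝔸 : Type*} [NormedRing 𝔸] [NormedAlgebra ℝ 𝔸] [CompleteSpace 𝔸]
    [NormOneClass 𝔸] (x : 𝔸) : ‖exp x‖ ≤ Real.exp ‖x‖ := by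
  rw [exp_eq_tsum (𝕂 := ℝ)]
  refine (norm_tsum_le_tsum_norm (norm_expSeries_summable' x)).trans ?_
  have h2 : ∑' n : ℕ, ‖((Nat.factorial n : ℝ))⁻¹ • x ^ n‖
      ≤ ∑' n : ℕ, ((Nat.factorial n : ℝ))⁻¹ • ‖x‖ ^ n := by
    refine Summable.tsum_le_tsum (fun n => ?_) (norm_expSeries_summable' x)
      (expSeries_summable' (𝕂 := ℝ) ‖x‖)
    rw [norm_smul, smul_eq_mul]
    gcongr
    · simp
    · exact norm_pow_le x n
  refine h2.trans_eq ?_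
  rw [Real.exp_eq_exp_ℝ, exp_eq_tsum (𝕂 := ℝ)]

/-- The off-diagonal (nonnegative) part of `DN`. -/
def SN (N : ℕ) : Matrix (Fin (N - 1)) (Fin (N - 1)) ℝ :=
  fun i j => if (i : ℕ) + 1 = (j : ℕ) ∨ (j : ℕ) + 1 = (i : ℕ) then 1 else 0

section norms
variable (N : ℕ)

attribute [local instance] Matrix.linftyOpNormedRing Matrix.linftyOpNormedAlgebra

lemma SN_norm_le (hN : 2 ≤ N) : ‖SN N‖ ≤ 2 := by
  haveI : Nonempty (Fin (N-1)) := ⟨⟨0, by omega⟩⟩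
  rw [linfty_opNorm_def]
  have : ∀ i : Fin (N-1), ∑ j, ‖SN N i j‖₊ ≤ 2 := by
    intro i
    have hle : ∀ j : Fin (N-1), ‖SN N i j‖₊ ≤
        (if (i : ℕ) + 1 = (j : ℕ) then 1 else 0) + (if (j : ℕ) + 1 = (i : ℕ) then 1 else 0) := by
      intro j
      simp only [SN]
      split_ifs with h h1 h2 h3 h4 <;> simp_all <;> omega
    calc ∑ j, ‖SN N i j‖₊
        ≤ ∑ j : Fin (N-1), ((if (i : ℕ) + 1 = (j : ℕ) then 1 else 0)
            + (if (j : ℕ) + 1 = (i : ℕ) then 1 else 0)) := Finset.sum_le_sum fun j _ => hle j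
      _ = (∑ j : Fin (N-1), (if (i : ℕ) + 1 = (j : ℕ) then 1 else 0))
            + ∑ j : Fin (N-1), (if (j : ℕ) + 1 = (i : ℕ) then 1 else 0) := Finset.sum_add_distrib
      _ ≤ 1 + 1 := by
          gcongr
          · rw [Finset.sum_boole]
            rw [Nat.cast_le_one]
            refine Finset.card_le_one.2 fun a ha b hb => ?_
            simp only [Finset.mem_filter] at ha hb
            exact Fin.ext (by omega)
          · rw [Finset.sum_boole]
            rw [Nat.cast_le_one]
            refine Finset.card_le_one.2 fun a ha b hb => ?_
            simp only [Finset.mem_filter] at ha hb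
            exact Fin.ext (by omega)
      _ = 2 := by norm_num
  have h2 : (Finset.univ.sup fun i : Fin (N-1) => ∑ j, ‖SN N i j‖₊) ≤ 2 :=
    Finset.sup_le fun i _ => this i
  calc (((Finset.univ.sup fun i : Fin (N-1) => ∑ j, ‖SN N i j‖₊) : ℝ≥0) : ℝ)
      ≤ ((2 : ℝ≥0) : ℝ) := by exact_mod_cast h2
    _ = 2 := by norm_num

lemma exp_key (hN : 2 ≤ N) (t : ℝ) (ht : 0 ≤ t) (v : Fin (N - 1) → ℝ) :
    ‖(NormedSpace.exp (t • ((N : ℝ) ^ 2 • DN N))).mulVec v‖ ≤ ‖v‖ := by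
  haveI : Nonempty (Fin (N-1)) := ⟨⟨0, by omega⟩⟩
  set c : ℝ := t * (N:ℝ)^2 with hc
  have hc0 : 0 ≤ c := mul_nonneg ht (by positivity)
  have hsplit : t • ((N:ℝ)^2 • DN N) = c • SN N + (-(2*c)) • (1 : Matrix (Fin (N-1)) (Fin (N-1)) ℝ) := by
    ext i j
    simp only [DN, SN, Matrix.smul_apply, Matrix.add_apply, Matrix.one_apply, smul_eq_mul,
      smul_ite, Fin.ext_iff]
    split_ifs <;> first | omega | ring
  have hcomm : Commute (c • SN N) ((-(2*c)) • (1 : Matrix (Fin (N-1)) (Fin (N-1)) ℝ)) :=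
    (Commute.one_right (c • SN N)).smul_right _
  have hexp : exp (t • ((N:ℝ)^2 • DN N)) = Real.exp (-(2*c)) • exp (c • SN N) := by
    rw [hsplit, Matrix.exp_add_of_commute _ _ hcomm]
    have h1 : ((-(2*c)) • (1 : Matrix (Fin (N-1)) (Fin (N-1)) ℝ))
        = algebraMap ℝ _ (-(2*c)) := (Algebra.algebraMap_eq_smul_one _).symm
    have h2 : exp (algebraMap ℝ (Matrix (Fin (N-1)) (Fin (N-1)) ℝ) (-(2*c)))
        = algebraMap ℝ _ (exp (-(2*c))) := by
      rw [Matrix.algebraMap_eq_diagonal, Matrix.algebraMap_eq_diagonal, Matrix.exp_diagonal]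
      congr 1; ext i; simp [Pi.exp_def]
    rw [h1, h2, ← Real.exp_eq_exp_ℝ, Algebra.algebraMap_eq_smul_one,
      mul_smul_comm, mul_one]
  rw [hexp, Matrix.smul_mulVec, norm_smul, Real.norm_eq_abs,
    abs_of_pos (Real.exp_pos _)]
  have hS : ‖c • SN N‖ ≤ 2 * c := by
    rw [norm_smul, Real.norm_eq_abs, abs_of_nonneg hc0]
    calc c * ‖SN N‖ ≤ c * 2 := by gcongr; exact SN_norm_le N hN
      _ = 2 * c := by ring
  calc Real.exp (-(2*c)) * ‖exp (c • SN N) *ᵥ v‖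
      ≤ Real.exp (-(2*c)) * (Real.exp (2*c) * ‖v‖) := by
        gcongr
        calc ‖exp (c • SN N) *ᵥ v‖ ≤ ‖exp (c • SN N)‖ * ‖v‖ := linfty_opNorm_mulVec _ _
          _ ≤ Real.exp (2*c) * ‖v‖ := by
              gcongr
              exact (my_norm_exp_le _).trans (Real.exp_le_exp.2 hS)
    _ = ‖v‖ := by rw [← mul_assoc, ← Real.exp_add]; simp

end norms

/-- For every integer `N ≥ 2`, every `t ≥ 0` and every vector
`v ∈ ℝ^{N-1}`, one has `max_n |(exp (t N² Dᴺ) v)_n| ≤ max_n |v_n|`: the discrete heat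
semigroup is a contraction for the supremum norm on `ℝ^{N-1}`. -/
theorem exp_discrete_laplacian_sup_contraction (N : ℕ) (hN : 2 ≤ N)
    (t : ℝ) (ht : 0 ≤ t) (v : Fin (N - 1) → ℝ) :
    ∀ n : Fin (N - 1),
      |((NormedSpace.exp (t • ((N : ℝ) ^ 2 • DN N))).mulVec v) n| ≤ ⨆ k, |v k| := by
  haveI : Nonempty (Fin (N-1)) := ⟨⟨0, by omega⟩⟩
  intro n
  have h1 := exp_key N hN t ht v
  have h2 : |((NormedSpace.exp (t • ((N : ℝ) ^ 2 • DN N))).mulVec v) n|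
      ≤ ‖(NormedSpace.exp (t • ((N : ℝ) ^ 2 • DN N))).mulVec v‖ := by
    rw [← Real.norm_eq_abs]; exact norm_le_pi_norm _ n
  refine (h2.trans h1).trans ?_
  obtain ⟨k₀, -, hk⟩ := Finset.exists_mem_eq_sup Finset.univ Finset.univ_nonempty
    (fun k => ‖v k‖₊)
  rw [Pi.norm_def, hk]
  have h3 : ((‖v k₀‖₊ : NNReal) : ℝ) = |v k₀| := by
    simp [Real.norm_eq_abs]
  rw [h3]
  exact le_ciSup (f := fun k => |v k|) (Set.Finite.bddAbove (Set.finite_range _)) k₀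
end

section
/- There exists a constant C ∈ (0, ∞) such that for every integer N ≥ 2, every t > 0, and every 1 ≤ n ≤ N−1, one has N · Σ_{k=1}^{N−1} ((exp(t N² D^N))_{nk})² ≤ C/√t. -/
set_option maxHeartbeats 1000000

open Real Finset NormedSpace
open scoped Matrix

open NormedSpace
open scoped Matrix

lemma exp_mulVec_eigen {m : ℕ} (A : Matrix (Fin m) (Fin m) ℝ) (v : Fin m → ℝ) (μ : ℝ)
    (h : A *ᵥ v = μ • v) : exp A *ᵥ v = Real.exp μ • v := by
  letI : SeminormedRing (Matrix (Fin m) (Fin m) ℝ) := Matrix.linftyOpSemiNormedRing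
  letI : NormedRing (Matrix (Fin m) (Fin m) ℝ) := Matrix.linftyOpNormedRing
  letI : NormedAlgebra ℝ (Matrix (Fin m) (Fin m) ℝ) := Matrix.linftyOpNormedAlgebra
  have hpow : ∀ n : ℕ, A ^ n *ᵥ v = μ ^ n • v := by
    intro n
    induction n with
    | zero => simp
    | succ n ih =>
      rw [pow_succ', ← Matrix.mulVec_mulVec, ih, Matrix.mulVec_smul, h, smul_smul, pow_succ, mul_comm]
  let L : Matrix (Fin m) (Fin m) ℝ →ₗ[ℝ] (Fin m → ℝ) :=
    { toFun := fun B => B *ᵥ v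
      map_add' := fun B C => Matrix.add_mulVec B C v
      map_smul' := fun c B => (Matrix.smul_mulVec c B v) }
  have hL : Continuous L := L.continuous_of_finiteDimensional
  let L' : Matrix (Fin m) (Fin m) ℝ →L[ℝ] (Fin m → ℝ) := ⟨L, hL⟩
  have hsum : Summable fun n : ℕ => ((Nat.factorial n : ℝ)⁻¹) • A ^ n := expSeries_summable' A
  have : exp A *ᵥ v = L' (exp A) := rfl
  rw [this, exp_eq_tsum ℝ, L'.map_tsum hsum]
  have : ∀ n : ℕ, L' (((Nat.factorial n : ℝ)⁻¹) • A ^ n) = (((Nat.factorial n : ℝ)⁻¹) * μ ^ n) • v := by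
    intro n
    show (((Nat.factorial n : ℝ)⁻¹) • A ^ n) *ᵥ v = _
    rw [Matrix.smul_mulVec, hpow, smul_smul]
  simp_rw [this]
  rw [Summable.tsum_smul_const]
  · congr 1
    rw [Real.exp_eq_exp_ℝ, exp_eq_tsum ℝ]
    simp [smul_eq_mul]
  · exact (Real.summable_pow_div_factorial μ).congr fun n => by
      rw [div_eq_inv_mul]



lemma cos_sum_eq (N r : ℕ) (hN : 2 ≤ N) (hr : 1 ≤ r) (hr2 : r < 2 * N) :
    ∑ k ∈ Finset.range (N - 1), Real.cos (r * (k + 1) * π / N) =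
      if 2 ∣ r then -1 else 0 := by
  have hNpos : (0:ℝ) < N := by positivity
  set φ : ℝ := r * π / N with hφ
  have hφ0 : 0 < φ := by
    apply div_pos (by positivity) hNpos
  have hφ2 : φ < 2 * π := by
    rw [hφ, div_lt_iff₀ hNpos]
    calc (r:ℝ) * π < (2*N : ℕ) * π := by
          apply mul_lt_mul_of_pos_right _ Real.pi_pos
          exact_mod_cast hr2
      _ = 2 * π * N := by push_cast; ring
  set z : ℂ := Complex.exp (φ * Complex.I) with hz
  have hz1 : z ≠ 1 := by
    rw [hz, Ne, Complex.exp_eq_one_iff]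
    rintro ⟨n, hn⟩
    have h' : (φ : ℂ) * Complex.I = ((n * (2 * π) : ℝ) : ℂ) * Complex.I := by
      rw [hn]; push_cast; ring
    have this : φ = n * (2 * π) := by exact_mod_cast mul_right_cancel₀ Complex.I_ne_zero h'
    rcases lt_trichotomy (n:ℝ) 0 with h | h | h
    · nlinarith [Real.pi_pos]
    · rw [h] at this; simp at this; linarith
    · have : (1:ℝ) ≤ n := by exact_mod_cast (by exact_mod_cast h : 0 < n)
      nlinarith [Real.pi_pos]
  have hre : z.re = Real.cos φ := Complex.exp_ofReal_mul_I_re φ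
  have him : z.im = Real.sin φ := Complex.exp_ofReal_mul_I_im φ
  have hzk : ∀ k : ℕ, (z ^ k).re = Real.cos (k * φ) := by
    intro k
    rw [hz, ← Complex.exp_nat_mul]
    have : (k : ℂ) * (φ * Complex.I) = (((k * φ : ℝ)) : ℂ) * Complex.I := by
      push_cast; ring
    rw [this, Complex.exp_ofReal_mul_I_re]
  have hzN : z ^ N = (-1) ^ r := by
    rw [hz, ← Complex.exp_nat_mul]
    have : (N : ℂ) * (φ * Complex.I) = r * (π * Complex.I) := by
      have hNC : (N : ℂ) ≠ 0 := Nat.cast_ne_zero.mpr (by omega)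
      rw [hφ]; push_cast; field_simp
    rw [this, Complex.exp_nat_mul, Complex.exp_pi_mul_I]
  have hsum1 : ∑ k ∈ Finset.range N, z ^ k = (z ^ N - 1) / (z - 1) := geom_sum_eq hz1 N
  have hsum2 : ∑ k ∈ Finset.range N, z ^ k = 1 + ∑ k ∈ Finset.range (N - 1), z ^ (k + 1) := by
    have hN1 : N = (N - 1) + 1 := by omega
    rw [hN1, Finset.sum_range_succ']
    simp [add_comm]
  have key : (∑ k ∈ Finset.range (N - 1), z ^ (k + 1)).re = if 2 ∣ r then -1 else 0 := by
    have hs : ∑ k ∈ Finset.range (N - 1), z ^ (k + 1) = (z ^ N - 1) / (z - 1) - 1 := by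
      rw [← hsum1, hsum2]; ring
    by_cases hpar : 2 ∣ r
    · have : ((-1 : ℂ)) ^ r = 1 := by
        rcases hpar with ⟨s, rfl⟩; rw [pow_mul]; simp
      rw [hs, hzN, this]
      simp [hpar]
    · have : ((-1 : ℂ)) ^ r = -1 := by
        rw [Odd.neg_one_pow]; exact Nat.odd_iff.mpr (Nat.two_dvd_ne_zero.mp hpar)
      rw [hs, hzN, this]
      have hcos : Real.cos φ ≠ 1 := by
        intro hc
        apply hz1
        have hsin : Real.sin φ = 0 := by
          have := Real.sin_sq_add_cos_sq φ
          nlinarith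
        rw [hz]
        apply Complex.ext <;> simp [hre, him, hc, hsin]
      have hns : Complex.normSq (z - 1) = 2 - 2 * Real.cos φ := by
        rw [Complex.normSq_apply]
        simp [Complex.sub_re, Complex.sub_im, hre, him]
        nlinarith [Real.sin_sq_add_cos_sq φ]
      have : ((-1 - 1 : ℂ) / (z - 1)).re = 1 := by
        rw [Complex.div_re, hns]
        have h1 : (-1 - 1 : ℂ).re = -2 := by norm_num
        have h2 : (-1 - 1 : ℂ).im = 0 := by norm_num
        rw [h1, h2]
        rw [Complex.sub_re, Complex.sub_im, hre, him]
        simp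
        rw [div_eq_one_iff_eq]
        · ring
        · intro hc; apply hcos; linarith
      rw [Complex.sub_re, this]
      simp [hpar]
  rw [← key, Complex.re_sum]
  apply Finset.sum_congr rfl
  intro k _
  rw [hzk]
  rw [hφ]
  congr 1
  push_cast; ring




lemma sin_orth (N p q : ℕ) (hN : 2 ≤ N) (hp : 1 ≤ p) (hp2 : p ≤ N - 1)
    (hq : 1 ≤ q) (hq2 : q ≤ N - 1) :
    ∑ k ∈ Finset.range (N - 1), Real.sin (p * (k + 1) * π / N) * Real.sin (q * (k + 1) * π / N)
      = if p = q then (N : ℝ) / 2 else 0 := by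
  wlog hle : q ≤ p generalizing p q
  · have := this q p hq hq2 hp hp2 (by omega)
    calc ∑ k ∈ Finset.range (N - 1), Real.sin (p*(k+1)*π/N) * Real.sin (q*(k+1)*π/N)
        = ∑ k ∈ Finset.range (N - 1), Real.sin (q*(k+1)*π/N) * Real.sin (p*(k+1)*π/N) := by
          apply Finset.sum_congr rfl; intros; ring
      _ = if q = p then (N : ℝ) / 2 else 0 := this
      _ = if p = q then (N : ℝ) / 2 else 0 := by
          by_cases h : p = q <;> simp [h, eq_comm]
  have hprod : ∀ a b : ℝ, Real.sin a * Real.sin b = (Real.cos (a - b) - Real.cos (a + b)) / 2 := by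
    intro a b; rw [Real.cos_sub, Real.cos_add]; ring
  set d : ℕ := p - q with hd
  have hstep : ∀ k : ℕ,
      Real.sin (p*(k+1)*π/N) * Real.sin (q*(k+1)*π/N)
        = (Real.cos (d*(k+1)*π/N) - Real.cos ((p+q)*(k+1)*π/N)) / 2 := by
    intro k
    rw [hprod]
    congr 3
    · rw [hd]
      have : ((p - q : ℕ) : ℝ) = (p : ℝ) - q := by
        rw [Nat.cast_sub hle]
      rw [this]; ring
    · push_cast; ring
  simp_rw [hstep]
  rw [← Finset.sum_div, Finset.sum_sub_distrib]
  have hsum2 : ∑ k ∈ Finset.range (N-1), Real.cos ((p+q)*(k+1)*π/N) = -1 ∨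
      (¬ 2 ∣ (p + q) ∧ ∑ k ∈ Finset.range (N-1), Real.cos ((p+q)*(k+1)*π/N) = 0) := by
    have h := cos_sum_eq N (p+q) hN (by omega) (by omega)
    push_cast at h
    by_cases hpar : 2 ∣ (p+q)
    · left; rw [h]; simp [hpar]
    · right; exact ⟨hpar, by rw [h]; simp [hpar]⟩
  by_cases hpq : p = q
  · subst hpq
    have hd0 : d = 0 := by omega
    have h1 : ∑ k ∈ Finset.range (N-1), Real.cos ((d:ℝ)*(k+1)*π/N) = (N:ℝ) - 1 := by
      have hone : ∀ k ∈ Finset.range (N-1), Real.cos ((d:ℝ)*(k+1)*π/N) = 1 := by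
        intro k _
        rw [hd0]
        norm_num
      rw [Finset.sum_congr rfl hone, Finset.sum_const, Finset.card_range, nsmul_eq_mul, mul_one,
        Nat.cast_sub (by omega : 1 ≤ N), Nat.cast_one]
    rcases hsum2 with h2 | ⟨hf, _⟩
    · rw [h1, h2, if_pos rfl]; ring
    · exact absurd hf (by omega)
  · have hd1 : 1 ≤ d := by omega
    have h1 := cos_sum_eq N d hN hd1 (by omega)
    have h2 := cos_sum_eq N (p+q) hN (by omega) (by omega)
    push_cast at h2
    have hpar : (2 ∣ d) ↔ (2 ∣ (p+q)) := by omega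
    rw [h1, h2]
    by_cases hc : 2 ∣ d
    · rw [if_pos hc, if_pos (hpar.mp hc), if_neg hpq]; ring
    · rw [if_neg hc, if_neg (fun h => hc (hpar.mpr h)), if_neg hpq]; ring




lemma DN_mulVec (N : ℕ) (hN : 2 ≤ N) (j : Fin (N - 1)) :
    DN N *ᵥ (fun k : Fin (N - 1) => Real.sin (((j:ℕ) + 1) * ((k:ℕ) + 1) * π / N))
      = (2 * Real.cos (((j:ℕ) + 1) * π / N) - 2) •
        (fun k : Fin (N - 1) => Real.sin (((j:ℕ) + 1) * ((k:ℕ) + 1) * π / N)) := by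
  set g : ℕ → ℝ := fun x => Real.sin (((j:ℕ) + 1) * x * π / N) with hg
  have hsplit : ∀ i k : Fin (N - 1), DN N i k =
      (if (i : ℕ) = (k : ℕ) then (-2 : ℝ) else 0) +
      ((if (i : ℕ) + 1 = (k : ℕ) then (1 : ℝ) else 0) +
       (if (k : ℕ) + 1 = (i : ℕ) then (1 : ℝ) else 0)) := by
    intro i k
    unfold DN
    split_ifs <;> first | (norm_num; done) | (norm_num; omega) | omega
  have hv : (fun k : Fin (N - 1) => Real.sin (((j:ℕ) + 1) * ((k:ℕ) + 1) * π / N))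
      = fun k : Fin (N - 1) => g ((k:ℕ)+1) := by
    funext k
    rw [hg]
    congr 1
    push_cast
    ring
  rw [hv]
  funext i
  have hlhs : (DN N *ᵥ fun k : Fin (N-1) => g ((k:ℕ)+1)) i
      = g (i:ℕ) + g ((i:ℕ)+2) - 2 * g ((i:ℕ)+1) := by
    show ∑ k : Fin (N-1), DN N i k * g ((k:ℕ)+1) = _
    simp_rw [hsplit, add_mul, Finset.sum_add_distrib]
    have h1 : ∑ k : Fin (N-1), (if (i:ℕ) = (k:ℕ) then (-2:ℝ) else 0) * g ((k:ℕ)+1)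
        = -2 * g ((i:ℕ)+1) := by
      rw [Finset.sum_eq_single i]
      · simp
      · intro b _ hb
        rw [if_neg (fun h => hb (Fin.ext h.symm)), zero_mul]
      · simp
    have h2 : ∑ k : Fin (N-1), (if (i:ℕ)+1 = (k:ℕ) then (1:ℝ) else 0) * g ((k:ℕ)+1)
        = g ((i:ℕ)+2) := by
      by_cases hi : (i:ℕ) + 1 < N - 1
      · rw [Finset.sum_eq_single (⟨(i:ℕ)+1, hi⟩ : Fin (N-1))]
        · norm_num
        · intro b _ hb
          rw [if_neg, zero_mul]
          intro h
          apply hb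
          apply Fin.ext
          simp [← h]
        · simp
      · have hiN : (i:ℕ) + 2 = N := by have := i.isLt; omega
        have : g ((i:ℕ)+2) = 0 := by
          rw [hg, hiN]
          have : ((j:ℕ) + 1 : ℝ) * N * π / N = ((j:ℕ)+1 : ℕ) * π := by
            push_cast
            field_simp
          simp only []
          rw [show ((N:ℝ)) = ((N:ℕ):ℝ) by norm_num] at this ⊢
          rw [this, Real.sin_nat_mul_pi]
        rw [this, Finset.sum_eq_zero]
        intro b _
        rw [if_neg, zero_mul]
        intro h
        have := b.isLt
        omega
    have h3 : ∑ k : Fin (N-1), (if (k:ℕ)+1 = (i:ℕ) then (1:ℝ) else 0) * g ((k:ℕ)+1)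
        = g (i:ℕ) := by
      by_cases hi : 1 ≤ (i:ℕ)
      · have hi1 : (i:ℕ) - 1 < N - 1 := by have := i.isLt; omega
        rw [Finset.sum_eq_single (⟨(i:ℕ)-1, hi1⟩ : Fin (N-1))]
        · rw [if_pos (show ((i:ℕ)-1)+1 = (i:ℕ) by omega), one_mul]
          congr 1
          show (i:ℕ)-1+1 = (i:ℕ)
          omega
        · intro b _ hb
          rw [if_neg, zero_mul]
          intro h
          exact hb (Fin.ext (show (b:ℕ) = (i:ℕ)-1 by omega))
        · simp
      · have hi0 : (i:ℕ) = 0 := by omega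
        have : g (i:ℕ) = 0 := by rw [hg, hi0]; simp
        rw [this, Finset.sum_eq_zero]
        intro b _
        rw [if_neg, zero_mul]
        omega
    rw [h1, h2, h3]
    ring
  rw [hlhs]
  have hN0 : (N:ℝ) ≠ 0 := by positivity
  show _ = (2 * Real.cos (((j:ℕ) + 1) * π / N) - 2) * g ((i:ℕ)+1)
  rw [hg]
  simp only []
  have e1 : (((j:ℕ) + 1 : ℝ)) * ((i:ℕ) : ℕ) * π / N
      = ((((j:ℕ)+1) * (((i:ℕ)+1)) * π / N) - (((j:ℕ)+1) * π / N)) := by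
    field_simp; ring
  have e2 : (((j:ℕ) + 1 : ℝ)) * (((i:ℕ)+2 : ℕ)) * π / N
      = ((((j:ℕ)+1) * (((i:ℕ)+1)) * π / N) + (((j:ℕ)+1) * π / N)) := by
    push_cast; field_simp; ring
  have e3 : (((j:ℕ) + 1 : ℝ)) * (((i:ℕ)+1 : ℕ)) * π / N
      = (((j:ℕ)+1) * (((i:ℕ)+1)) * π / N) := by
    push_cast; ring
  rw [e1, e2, e3, Real.sin_sub, Real.sin_add]
  ring



lemma gauss_sum_bound (a : ℝ) (ha : 0 < a) (M : ℕ) :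
    ∑ j ∈ Finset.range M, Real.exp (-(a * (j + 1) ^ 2)) ≤ 2 / Real.sqrt a := by
  have hsa : 0 < Real.sqrt a := Real.sqrt_pos.mpr ha
  set J : ℕ := ⌈(Real.sqrt a)⁻¹⌉₊ with hJ
  have hJ1 : (J : ℝ) ≤ (Real.sqrt a)⁻¹ + 1 :=
    (Nat.ceil_lt_add_one (by positivity)).le
  set r : ℝ := Real.exp (-Real.sqrt a) with hr
  have hr0 : 0 ≤ r := (Real.exp_pos _).le
  have hr0' : 0 < r := Real.exp_pos _
  have hr1 : r < 1 := Real.exp_lt_one_iff.mpr (by linarith)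
  have hterm : ∀ j : ℕ, Real.exp (-(a * (j + 1) ^ 2)) ≤
      (if j + 1 < J then (1:ℝ) else 0) + r ^ (j + 1) := by
    intro j
    by_cases h : j + 1 < J
    · rw [if_pos h]
      have h1 : Real.exp (-(a * (j + 1) ^ 2)) ≤ 1 := by
        rw [Real.exp_le_one_iff]
        have : (0:ℝ) ≤ a * ((j:ℝ) + 1) ^ 2 := by positivity
        linarith
      nlinarith [pow_nonneg hr0 (j+1)]
    · rw [if_neg h, zero_add, ← Real.exp_nat_mul]
      apply Real.exp_le_exp.mpr
      have hJle : (J : ℝ) ≤ (j:ℝ) + 1 := by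
        have : J ≤ j + 1 := by omega
        exact_mod_cast this
      have hJge : (Real.sqrt a)⁻¹ ≤ (J : ℝ) := Nat.le_ceil _
      have hsq : Real.sqrt a * Real.sqrt a = a := Real.mul_self_sqrt ha.le
      have h1 : Real.sqrt a ≤ a * ((j:ℝ) + 1) := by
        calc Real.sqrt a = a / Real.sqrt a := by
              rw [eq_div_iff hsa.ne']; nlinarith
          _ = a * (Real.sqrt a)⁻¹ := by ring
          _ ≤ a * J := by nlinarith
          _ ≤ a * ((j:ℝ)+1) := by nlinarith
      have h2 : ((j + 1 : ℕ) : ℝ) * -Real.sqrt a = -(Real.sqrt a * ((j:ℝ)+1)) := by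
        push_cast; ring
      rw [h2, neg_le_neg_iff]
      have hj1 : (0:ℝ) ≤ (j:ℝ) + 1 := by positivity
      calc Real.sqrt a * ((j:ℝ)+1) ≤ (a * ((j:ℝ)+1)) * ((j:ℝ)+1) := by nlinarith
        _ = a * ((j:ℝ)+1)^2 := by ring
  have hcount : ∑ j ∈ Finset.range M, (if j + 1 < J then (1:ℝ) else 0)
      ≤ (Real.sqrt a)⁻¹ := by
    rw [Finset.sum_boole]
    have hsub : (Finset.range M).filter (fun j => j + 1 < J) ⊆ Finset.range (J - 1) := by
      intro x hx
      simp only [Finset.mem_filter, Finset.mem_range] at hx ⊢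
      omega
    have hcard : ((Finset.range M).filter (fun j => j + 1 < J)).card ≤ J - 1 := by
      simpa using Finset.card_le_card hsub
    calc (((Finset.range M).filter (fun j => j + 1 < J)).card : ℝ) ≤ ((J - 1 : ℕ) : ℝ) := by
          exact_mod_cast hcard
      _ ≤ (Real.sqrt a)⁻¹ := by
          rcases Nat.eq_zero_or_pos J with h0 | h1
          · simp [h0]
          · have : ((J - 1 : ℕ) : ℝ) = (J : ℝ) - 1 := by
              push_cast [h1]; ring
            rw [this]; linarith
  have hgeom : ∑ j ∈ Finset.range M, r ^ (j + 1) ≤ (Real.sqrt a)⁻¹ := by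
    have hsum : ∑ j ∈ Finset.range M, r ^ (j+1) = r * ∑ j ∈ Finset.range M, r ^ j := by
      rw [Finset.mul_sum]
      apply Finset.sum_congr rfl
      intros; rw [← pow_succ']
    rw [hsum]
    have hle : ∑ j ∈ Finset.range M, r ^ j ≤ (1 - r)⁻¹ := by
      calc ∑ j ∈ Finset.range M, r ^ j ≤ ∑' j : ℕ, r ^ j :=
            Summable.sum_le_tsum _ (fun i _ => pow_nonneg hr0 i)
              (summable_geometric_of_lt_one hr0 hr1)
        _ = (1 - r)⁻¹ := tsum_geometric_of_lt_one hr0 hr1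
    have h1r : 0 < 1 - r := by linarith
    have hkey : Real.sqrt a * r ≤ 1 - r := by
      have hexp : Real.sqrt a + 1 ≤ Real.exp (Real.sqrt a) := Real.add_one_le_exp _
      have hmul : Real.exp (Real.sqrt a) * r = 1 := by
        rw [hr, ← Real.exp_add]; simp
      nlinarith
    calc r * ∑ j ∈ Finset.range M, r ^ j ≤ r * (1 - r)⁻¹ := by
          apply mul_le_mul_of_nonneg_left hle hr0
      _ ≤ (Real.sqrt a)⁻¹ := by
          rw [← div_eq_mul_inv, ← one_div, div_le_div_iff₀ h1r hsa]
          nlinarith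
  calc ∑ j ∈ Finset.range M, Real.exp (-(a * (j + 1) ^ 2))
      ≤ ∑ j ∈ Finset.range M, ((if j + 1 < J then (1:ℝ) else 0) + r ^ (j + 1)) :=
        Finset.sum_le_sum fun j _ => hterm j
    _ = (∑ j ∈ Finset.range M, (if j + 1 < J then (1:ℝ) else 0))
        + ∑ j ∈ Finset.range M, r ^ (j+1) := Finset.sum_add_distrib
    _ ≤ (Real.sqrt a)⁻¹ + (Real.sqrt a)⁻¹ := add_le_add hcount hgeom
    _ = 2 / Real.sqrt a := by rw [div_eq_mul_inv]; ring

/-- There exists a constant `C ∈ (0, ∞)` such that for every `N ≥ 2`,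
every `t > 0` and every row index `n`, one has
`N · Σ_k ((exp (t N² Dᴺ))_{nk})² ≤ C / √t`. -/
theorem exp_discrete_laplacian_squared_row_sum_bound :
    ∃ C : ℝ, 0 < C ∧
      ∀ (N : ℕ), 2 ≤ N → ∀ (t : ℝ), 0 < t → ∀ n : Fin (N - 1),
        (N : ℝ) * ∑ k : Fin (N - 1),
            (NormedSpace.exp (t • ((N : ℝ) ^ 2 • DN N)) n k) ^ 2 ≤
          C / Real.sqrt t := by
  refine ⟨2, by norm_num, ?_⟩
  intro N hN t ht n
  have hNR : (0:ℝ) < N := by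
    have : (0:ℕ) < N := by omega
    exact_mod_cast this
  set s : ℝ := t * (N:ℝ)^2 with hs
  have hspos : 0 < s := by positivity
  set v : Fin (N-1) → Fin (N-1) → ℝ :=
    fun j k => Real.sin (((j:ℕ)+1) * ((k:ℕ)+1) * π / N) with hv
  set lam : Fin (N-1) → ℝ := fun j => 2 * Real.cos (((j:ℕ)+1) * π / N) - 2 with hlam
  have heig : ∀ (c : ℝ) (j : Fin (N-1)), (c • DN N) *ᵥ v j = (c * lam j) • v j := by
    intro c j
    rw [Matrix.smul_mulVec, DN_mulVec N hN j, smul_smul]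
  have hexp_eig : ∀ (c : ℝ) (j : Fin (N-1)),
      exp (c • DN N) *ᵥ v j = Real.exp (c * lam j) • v j :=
    fun c j => exp_mulVec_eigen _ _ _ (heig c j)
  have hmat : t • ((N:ℝ)^2 • DN N) = s • DN N := by rw [smul_smul, hs]
  have hsym : (exp (s • DN N))ᵀ = exp (s • DN N) := by
    rw [← Matrix.exp_transpose]
    congr 1
    rw [Matrix.transpose_smul]
    congr 1
    ext i k
    simp only [Matrix.transpose_apply]
    unfold DN
    split_ifs <;> first | rfl | omega
  set M2 : Matrix (Fin (N-1)) (Fin (N-1)) ℝ := exp ((2*s) • DN N) with hM2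
  have hsq : ∑ k : Fin (N-1), (exp (s • DN N) n k)^2 = M2 n n := by
    have hmm : exp (s • DN N) * exp (s • DN N) = M2 := by
      rw [hM2, show (2*s) • DN N = s • DN N + s • DN N by rw [← add_smul]; ring_nf]
      exact (Matrix.exp_add_of_commute _ _ (Commute.refl _)).symm
    rw [← hmm, Matrix.mul_apply]
    apply Finset.sum_congr rfl
    intro k _
    have hk : exp (s • DN N) k n = exp (s • DN N) n k := by
      conv_lhs => rw [← hsym]
      rw [Matrix.transpose_apply]
    rw [hk]; ring
  have horth : ∀ a b : Fin (N-1), ∑ j : Fin (N-1), v j a * v j b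
      = if a = b then (N:ℝ)/2 else 0 := by
    intro a b
    have h := sin_orth N ((a:ℕ)+1) ((b:ℕ)+1) hN (by omega) (by have := a.isLt; omega)
      (by omega) (by have := b.isLt; omega)
    push_cast at h
    have hconv : ∑ j : Fin (N-1), v j a * v j b
        = ∑ jj ∈ Finset.range (N-1), Real.sin (((a:ℕ)+1) * ((jj:ℕ)+1) * π / N)
            * Real.sin (((b:ℕ)+1) * ((jj:ℕ)+1) * π / N) := by
      rw [← Fin.sum_univ_eq_sum_range]
      apply Finset.sum_congr rfl
      intro j _
      rw [hv]
      simp only []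
      congr 2 <;> · congr 1 <;> ring
    rw [hconv]
    rw [h]
    by_cases hab : a = b
    · rw [if_pos hab, if_pos (by rw [hab])]
    · rw [if_neg hab, if_neg (fun hc => hab (Fin.ext (by omega)))]
  have hdecomp : (Pi.single n (1:ℝ) : Fin (N-1) → ℝ)
      = ∑ j : Fin (N-1), ((2/(N:ℝ)) * v j n) • v j := by
    funext k
    rw [Finset.sum_apply]
    simp only [Pi.smul_apply, smul_eq_mul]
    have : ∑ j : Fin (N-1), 2/(N:ℝ) * v j n * (v j k)
        = 2/(N:ℝ) * ∑ j : Fin (N-1), v j n * v j k := by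
      rw [Finset.mul_sum]
      apply Finset.sum_congr rfl
      intros; ring
    rw [this, horth n k]
    by_cases hnk : n = k
    · rw [if_pos hnk]
      subst hnk
      rw [Pi.single_eq_same]
      field_simp
    · rw [if_neg hnk, Pi.single_eq_of_ne (fun hc => hnk (hc.symm)) 1]
      ring
  have hdiag : M2 n n = ∑ j : Fin (N-1),
      (2/(N:ℝ)) * Real.exp ((2*s) * lam j) * (v j n)^2 := by
    have h1 : (M2 *ᵥ Pi.single n (1:ℝ)) n = M2 n n := by
      rw [Matrix.mulVec_single]
      simp
    rw [← h1, hdecomp]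
    have h2 : M2 *ᵥ (∑ j : Fin (N-1), ((2/(N:ℝ)) * v j n) • v j)
        = ∑ j : Fin (N-1), ((2/(N:ℝ)) * v j n) • (M2 *ᵥ v j) := by
      rw [show ∀ w, M2 *ᵥ w = Matrix.mulVecLin M2 w from fun w => rfl]
      rw [map_sum]
      apply Finset.sum_congr rfl
      intro j _
      rw [LinearMap.map_smul]
      rfl
    rw [h2]
    rw [Finset.sum_apply]
    apply Finset.sum_congr rfl
    intro j _
    rw [hM2, hexp_eig (2*s) j]
    simp only [Pi.smul_apply, smul_eq_mul]
    ring
  have hlam_bound : ∀ j : Fin (N-1), (2*s) * lam j ≤ -((8*t) * ((j:ℕ)+1)^2) := by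
    intro j
    have hjN : ((j:ℕ)+1 : ℝ) ≤ N := by
      have := j.isLt
      have : (j:ℕ)+1 ≤ N := by omega
      exact_mod_cast this
    have hθ : |((j:ℕ)+1 : ℝ) * π / N| ≤ π := by
      rw [abs_of_nonneg (by positivity)]
      rw [div_le_iff₀ hNR]
      nlinarith [Real.pi_pos]
    have hcos := Real.cos_le_one_sub_mul_cos_sq hθ
    have hπ : (0:ℝ) < π := Real.pi_pos
    have hlamj : lam j ≤ -(4 * ((j:ℕ)+1)^2 / (N:ℝ)^2) := by
      rw [hlam]
      simp only []
      have hsq : (((j:ℕ)+1 : ℝ) * π / N)^2 = ((j:ℕ)+1 : ℝ)^2 * π^2 / (N:ℝ)^2 := by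
        field_simp
      rw [hsq] at hcos
      have h2π : 2 / π^2 * (((j:ℕ)+1 : ℝ)^2 * π^2 / (N:ℝ)^2)
          = 2 * ((j:ℕ)+1 : ℝ)^2 / (N:ℝ)^2 := by
        field_simp
      rw [h2π] at hcos
      simp only [div_eq_mul_inv] at hcos ⊢
      linarith
    have h2s : 0 < 2*s := by linarith
    calc (2*s) * lam j ≤ (2*s) * (-(4 * ((j:ℕ)+1)^2 / (N:ℝ)^2)) :=
          mul_le_mul_of_nonneg_left hlamj h2s.le
      _ = -((8*t) * ((j:ℕ)+1)^2) := by
          rw [hs]; field_simp; ring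
  have hN2 : (0:ℝ) < 8*t := by linarith
  have hfinal : M2 n n ≤ (2/(N:ℝ)) * (2 / Real.sqrt (8*t)) := by
    rw [hdiag]
    calc ∑ j : Fin (N-1), (2/(N:ℝ)) * Real.exp ((2*s) * lam j) * (v j n)^2
        ≤ ∑ j : Fin (N-1), (2/(N:ℝ)) * Real.exp (-((8*t) * ((j:ℕ)+1)^2)) := by
          apply Finset.sum_le_sum
          intro j _
          have hv1 : (v j n)^2 ≤ 1 := Real.sin_sq_le_one _
          have he : Real.exp ((2*s) * lam j) ≤ Real.exp (-((8*t) * ((j:ℕ)+1)^2)) :=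
            Real.exp_le_exp.mpr (hlam_bound j)
          have hepos : (0:ℝ) < Real.exp ((2*s) * lam j) := Real.exp_pos _
          have h2N : (0:ℝ) ≤ 2/(N:ℝ) := by positivity
          calc (2/(N:ℝ)) * Real.exp ((2*s) * lam j) * (v j n)^2
              ≤ (2/(N:ℝ)) * Real.exp ((2*s) * lam j) * 1 := by
                apply mul_le_mul_of_nonneg_left hv1 (by positivity)
            _ = (2/(N:ℝ)) * Real.exp ((2*s) * lam j) := by ring
            _ ≤ (2/(N:ℝ)) * Real.exp (-((8*t) * ((j:ℕ)+1)^2)) :=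
                mul_le_mul_of_nonneg_left he h2N
      _ = (2/(N:ℝ)) * ∑ jj ∈ Finset.range (N-1), Real.exp (-((8*t) * ((jj:ℕ)+1)^2)) := by
          rw [Finset.mul_sum, ← Fin.sum_univ_eq_sum_range]
      _ ≤ (2/(N:ℝ)) * (2 / Real.sqrt (8*t)) := by
          apply mul_le_mul_of_nonneg_left _ (by positivity)
          have := gauss_sum_bound (8*t) hN2 (N-1)
          convert this using 2
      _ = (2/(N:ℝ)) * (2 / Real.sqrt (8*t)) := rfl
  rw [hmat, hsq]
  calc (N:ℝ) * M2 n n ≤ (N:ℝ) * ((2/(N:ℝ)) * (2 / Real.sqrt (8*t))) :=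
        mul_le_mul_of_nonneg_left hfinal hNR.le
    _ = 4 / Real.sqrt (8*t) := by field_simp; ring
    _ ≤ 2 / Real.sqrt t := by
        rw [show (8:ℝ)*t = 8*t from rfl, Real.sqrt_mul (by norm_num : (0:ℝ) ≤ 8)]
        have h8 : (2:ℝ) ≤ Real.sqrt 8 := by
          rw [show (8:ℝ) = 2^2 * 2 by norm_num]
          rw [Real.sqrt_mul (by positivity), Real.sqrt_sq (by norm_num)]
          nlinarith [Real.sqrt_nonneg (2:ℝ), Real.sq_sqrt (by norm_num : (0:ℝ) ≤ 2),
            Real.sqrt_pos.mpr (by norm_num : (0:ℝ) < 2)]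
        have hst : 0 < Real.sqrt t := Real.sqrt_pos.mpr ht
        rw [div_le_div_iff₀ (by positivity) hst]
        nlinarith
end

section
/- Let λ > 0, τ > 0 and t > 0 be real numbers. Then ∫_0^t e^{−2λ(t−s)} (1 − e^{−λ(s − ℓ_τ(s))})² ds ≤ min(1, λτ)² / (2λ). -/
/-- For a step size `τ > 0`, `ℓ_τ (s) = τ ⌊s/τ⌋` is the left endpoint of the grid
interval of size `τ` containing `s ≥ 0`. -/
noncomputable def leftGrid (τ s : ℝ) : ℝ := τ * ⌊s / τ⌋₊

lemma leftGrid_le (τ s : ℝ) (hτ : 0 < τ) (hs : 0 ≤ s) : leftGrid τ s ≤ s := by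
  have h := Nat.floor_le (div_nonneg hs hτ.le)
  have := mul_le_mul_of_nonneg_left h hτ.le
  unfold leftGrid
  calc τ * (⌊s / τ⌋₊ : ℝ) ≤ τ * (s / τ) := this
    _ = s := by field_simp

lemma sub_leftGrid_le (τ s : ℝ) (hτ : 0 < τ) : s - leftGrid τ s ≤ τ := by
  have h := (Nat.lt_floor_add_one (s / τ)).le
  have := mul_le_mul_of_nonneg_left h hτ.le
  unfold leftGrid
  have h2 : τ * (s / τ) = s := by field_simp
  nlinarith

lemma measurable_leftGrid (τ : ℝ) (hτ : 0 < τ) : Measurable (leftGrid τ) := by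
  have hm : Monotone (leftGrid τ) := by
    intro a b hab
    unfold leftGrid
    have : ⌊a / τ⌋₊ ≤ ⌊b / τ⌋₊ := Nat.floor_mono (by gcongr)
    exact mul_le_mul_of_nonneg_left (by exact_mod_cast this) hτ.le
  exact hm.measurable

lemma sq_bound (lam τ x : ℝ) (hlam : 0 < lam) (hx : 0 ≤ x) (hxτ : x ≤ τ) :
    (1 - Real.exp (-lam * x)) ^ 2 ≤ (min 1 (lam * τ)) ^ 2 := by
  have h0 : 0 ≤ 1 - Real.exp (-lam * x) := by
    have : Real.exp (-lam * x) ≤ 1 := Real.exp_le_one_iff.mpr (by nlinarith)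
    linarith
  have h1 : 1 - Real.exp (-lam * x) ≤ 1 := by
    have := Real.exp_pos (-lam * x); linarith
  have h2 : 1 - Real.exp (-lam * x) ≤ lam * τ := by
    have := Real.add_one_le_exp (-lam * x)
    nlinarith
  exact pow_le_pow_left₀ h0 (le_min h1 h2) 2

/-- For real numbers `λ > 0`, `τ > 0` and `t > 0`, one has
`∫_0^t e^{-2λ(t-s)} (1 - e^{-λ(s - ℓ_τ(s))})² ds ≤ min (1, λτ)² / (2λ)`. -/
theorem integral_exp_grid_increment_bound (lam τ t : ℝ)
    (hlam : 0 < lam) (hτ : 0 < τ) (ht : 0 < t) :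
    ∫ s in (0:ℝ)..t,
        Real.exp (-2 * lam * (t - s)) * (1 - Real.exp (-lam * (s - leftGrid τ s))) ^ 2 ≤
      (min 1 (lam * τ)) ^ 2 / (2 * lam) := by
  set C := (min 1 (lam * τ)) ^ 2 with hC
  have hC0 : 0 ≤ C := sq_nonneg _
  -- measurability
  have hmeas : Measurable fun s : ℝ =>
      Real.exp (-2 * lam * (t - s)) * (1 - Real.exp (-lam * (s - leftGrid τ s))) ^ 2 := by
    have h1 : Measurable fun s : ℝ => Real.exp (-2 * lam * (t - s)) := by
      fun_prop
    have h2 : Measurable fun s : ℝ => (1 - Real.exp (-lam * (s - leftGrid τ s))) ^ 2 := by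
      have := measurable_leftGrid τ hτ
      measurability
    exact h1.mul h2
  -- integrability of LHS on [0,t]
  have hint1 : IntervalIntegrable (fun s : ℝ =>
      Real.exp (-2 * lam * (t - s)) * (1 - Real.exp (-lam * (s - leftGrid τ s))) ^ 2)
      MeasureTheory.volume 0 t := by
    apply IntervalIntegrable.mono_fun'
      (g := fun s : ℝ => Real.exp (-2 * lam * (t - s)) * 4)
    · exact (Continuous.intervalIntegrable (by fun_prop) 0 t)
    · exact hmeas.aestronglyMeasurable
    · filter_upwards [MeasureTheory.ae_restrict_mem measurableSet_uIoc] with s hs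
      have hs0 : 0 ≤ s := by
        rw [Set.uIoc_of_le ht.le] at hs
        exact hs.1.le
      have he : 0 < Real.exp (-2 * lam * (t - s)) := Real.exp_pos _
      have hb : |1 - Real.exp (-lam * (s - leftGrid τ s))| ≤ 2 := by
        have h1 : 0 < Real.exp (-lam * (s - leftGrid τ s)) := Real.exp_pos _
        have hx0 : 0 ≤ s - leftGrid τ s := by
          have := leftGrid_le τ s hτ hs0; linarith
        have h2 : Real.exp (-lam * (s - leftGrid τ s)) ≤ 1 :=
          Real.exp_le_one_iff.mpr (by nlinarith)
        rw [abs_of_nonneg (by linarith)]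
        linarith
      simp only [Real.norm_eq_abs, abs_mul, abs_pow, abs_of_pos he]
      have hb2 : |1 - Real.exp (-lam * (s - leftGrid τ s))| ^ 2 ≤ 4 := by
        have := abs_nonneg (1 - Real.exp (-lam * (s - leftGrid τ s)))
        nlinarith
      exact mul_le_mul_of_nonneg_left hb2 he.le
  have hint2 : IntervalIntegrable (fun s : ℝ => Real.exp (-2 * lam * (t - s)) * C)
      MeasureTheory.volume 0 t := Continuous.intervalIntegrable (by fun_prop) 0 t
  -- pointwise bound
  have hptwise : ∀ s ∈ Set.Icc (0:ℝ) t,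
      Real.exp (-2 * lam * (t - s)) * (1 - Real.exp (-lam * (s - leftGrid τ s))) ^ 2 ≤
      Real.exp (-2 * lam * (t - s)) * C := by
    intro s hs
    have hx0 : 0 ≤ s - leftGrid τ s := by
      have := leftGrid_le τ s hτ hs.1; linarith
    have hxτ : s - leftGrid τ s ≤ τ := sub_leftGrid_le τ s hτ
    exact mul_le_mul_of_nonneg_left (sq_bound lam τ _ hlam hx0 hxτ) (Real.exp_pos _).le
  have hmono := intervalIntegral.integral_mono_on ht.le hint1 hint2 hptwise
  -- compute the RHS integral
  have hcalc : (∫ s in (0:ℝ)..t, Real.exp (-2 * lam * (t - s)) * C) ≤ C / (2 * lam) := by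
    have hderiv : ∀ s ∈ Set.uIcc (0:ℝ) t,
        HasDerivAt (fun s : ℝ => Real.exp (-2 * lam * (t - s)) / (2 * lam))
          (Real.exp (-2 * lam * (t - s))) s := by
      intro s _
      have h1 : HasDerivAt (fun s : ℝ => -2 * lam * (t - s)) (2 * lam) s := by
        have := ((hasDerivAt_id s).const_sub t).const_mul (-2 * lam)
        exact this.congr_deriv (by ring)
      have h2 := (h1.exp).div_const (2 * lam)
      refine h2.congr_deriv ?_
      have h2l' : (2:ℝ) * lam ≠ 0 := by positivity
      field_simp
    have heq : (∫ s in (0:ℝ)..t, Real.exp (-2 * lam * (t - s))) =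
        Real.exp (-2 * lam * (t - t)) / (2 * lam) - Real.exp (-2 * lam * (t - 0)) / (2 * lam) := by
      apply intervalIntegral.integral_eq_sub_of_hasDerivAt hderiv
      exact Continuous.intervalIntegrable (by fun_prop) 0 t
    have : (∫ s in (0:ℝ)..t, Real.exp (-2 * lam * (t - s)) * C) =
        C * ∫ s in (0:ℝ)..t, Real.exp (-2 * lam * (t - s)) := by
      rw [← intervalIntegral.integral_const_mul]
      congr 1; ext s; ring
    rw [this, heq]
    have he1 : 0 < Real.exp (-2 * lam * (t - 0)) := Real.exp_pos _
    have h2l : 0 < 2 * lam := by linarith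
    rw [sub_self, mul_zero, Real.exp_zero]
    rw [div_sub_div_same, ← mul_div_assoc]
    gcongr
    nlinarith
  linarith
end

section
/- (Discrete Grönwall inequality with singular kernel.) For all C, T ∈ (0, ∞) there exists C_T ∈ (0, ∞), depending only on C and T, with the following property: for every positive integer M, with τ = T/M and t_k = kτ, if a real number A ≥ 0 and nonnegative reals a_0, a_1, …, a_M satisfy a_0 ≤ A and a_m ≤ A + C τ Σ_{k=0}^{m−1} a_k / √(t_m − t_k) for all m ∈ {1, …, M}, then max_{0 ≤ m ≤ M} a_m ≤ C_T · A. -/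
lemma aux_sqrt_sum (τ δ : ℝ) (hτ : 0 < τ) (hδ : 0 < δ) (m : ℕ) :
    ∑ j ∈ Finset.range m,
        (if ((j : ℝ) + 1) * τ ≤ δ then 1 / Real.sqrt (((j : ℝ) + 1) * τ) else 0)
      ≤ 2 * Real.sqrt δ / τ := by
  have key : ∀ n : ℕ, ∑ j ∈ Finset.range n,
      (if ((j : ℝ) + 1) * τ ≤ δ then 1 / Real.sqrt (((j : ℝ) + 1) * τ) else 0)
      ≤ 2 * Real.sqrt (min ((n : ℝ) * τ) δ) / τ := by
    intro n
    induction n with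
    | zero => simp [min_eq_left hδ.le]
    | succ n ih =>
      rw [Finset.sum_range_succ]
      push_cast
      split_ifs with h
      · have hmin1 : min ((n : ℝ) * τ) δ = (n : ℝ) * τ := by
          apply min_eq_left; nlinarith
        have hmin2 : min (((n : ℝ) + 1) * τ) δ = ((n : ℝ) + 1) * τ := by
          apply min_eq_left; nlinarith
        rw [hmin1] at ih
        rw [hmin2]
        set r := Real.sqrt ((n : ℝ) * τ) with hr
        set s := Real.sqrt (((n : ℝ) + 1) * τ) with hs
        have hr2 : r ^ 2 = (n : ℝ) * τ := Real.sq_sqrt (by positivity)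
        have hs2 : s ^ 2 = ((n : ℝ) + 1) * τ := Real.sq_sqrt (by positivity)
        have hr0 : 0 ≤ r := Real.sqrt_nonneg _
        have hs0 : 0 < s := Real.sqrt_pos.mpr (by positivity)
        have hrs : r ≤ s := Real.sqrt_le_sqrt (by nlinarith)
        have hstep : 2 * r / τ + 1 / s ≤ 2 * s / τ := by
          rw [div_add_div _ _ (ne_of_gt hτ) (ne_of_gt hs0),
            div_le_div_iff₀ (by positivity) hτ]
          nlinarith [sq_nonneg (s - r)]
        linarith
      · have hmono : Real.sqrt (min ((n : ℝ) * τ) δ) ≤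
            Real.sqrt (min (((n : ℝ) + 1) * τ) δ) := by
          apply Real.sqrt_le_sqrt
          exact min_le_min (by nlinarith) le_rfl
        have : 2 * Real.sqrt (min ((n : ℝ) * τ) δ) / τ
            ≤ 2 * Real.sqrt (min (((n : ℝ) + 1) * τ) δ) / τ := by gcongr
        linarith
  calc _ ≤ 2 * Real.sqrt (min ((m : ℝ) * τ) δ) / τ := key m
    _ ≤ 2 * Real.sqrt δ / τ := by
        gcongr
        exact min_le_right _ _

set_option maxHeartbeats 1000000 in
/-- Discrete Grönwall inequality with singular kernel: for all
`C, T ∈ (0, ∞)` there exists `C_T ∈ (0, ∞)`, depending only on `C` and `T`, such that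
for every `M ∈ ℕ`, `M ≥ 1`, with `τ = T/M` and `t_k = kτ`, whenever `A ≥ 0` and
nonnegative reals `a_0, …, a_M` satisfy `a_0 ≤ A` and
`a_m ≤ A + C τ Σ_{k=0}^{m-1} a_k / √(t_m - t_k)` for all `1 ≤ m ≤ M`, one has
`a_m ≤ C_T A` for all `0 ≤ m ≤ M`. -/
theorem discrete_gronwall_singular_kernel (C T : ℝ) (hC : 0 < C) (hT : 0 < T) :
    ∃ CT : ℝ, 0 < CT ∧
      ∀ (M : ℕ), 1 ≤ M → ∀ (A : ℝ), 0 ≤ A → ∀ a : ℕ → ℝ,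
        (∀ m ≤ M, 0 ≤ a m) → a 0 ≤ A →
        (∀ m, 1 ≤ m → m ≤ M →
          a m ≤ A + C * (T / M) *
            ∑ k ∈ Finset.range m,
              a k / Real.sqrt ((m : ℝ) * (T / M) - (k : ℝ) * (T / M))) →
        ∀ m ≤ M, a m ≤ CT * A := by
  set δ : ℝ := 1 / (16 * C ^ 2) with hδdef
  have hδ : 0 < δ := by positivity
  have hsδ : Real.sqrt δ = 1 / (4 * C) := by
    rw [show δ = (1 / (4 * C)) ^ 2 by rw [hδdef]; field_simp; ring]
    exact Real.sqrt_sq (by positivity)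
  set L : ℝ := 4 + 16 * C ^ 2 * T with hLdef
  have hL4 : 4 ≤ L := by nlinarith
  have hL1 : 1 ≤ L := by linarith
  have hL0 : 0 < L := by linarith
  clear_value δ L
  refine ⟨L ^ (⌈T / δ⌉₊), by positivity, ?_⟩
  intro M hM A hA a ha h0 hrec
  have hM0 : (0 : ℝ) < M := by exact_mod_cast Nat.lt_of_lt_of_le Nat.zero_lt_one hM
  set τ : ℝ := T / M with hτdef
  have hτ : 0 < τ := by positivity
  set f : ℕ → ℕ := fun k => ⌈((k : ℝ) * τ) / δ⌉₊ with hfdef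
  have hfmono : ∀ k n : ℕ, k ≤ n → f k ≤ f n := by
    intro k n hkn
    apply Nat.ceil_le_ceil
    have : (k : ℝ) ≤ n := Nat.cast_le.mpr hkn
    gcongr
  have hτM : τ * (M : ℝ) = T := by rw [hτdef]; field_simp
  clear_value τ f
  have key : ∀ m : ℕ, m ≤ M → a m ≤ A * L ^ (f m) := by
    intro m
    induction m using Nat.strong_induction_on with
    | _ m ih =>
      intro hmM
      rcases Nat.eq_zero_or_pos m with rfl | hm1
      · have hf0 : f 0 = 0 := by simp [hfdef]
        rw [hf0]; simpa using h0
      · have hrecm := hrec m hm1 hmM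
        set P : ℝ := A * L ^ (f m) with hPdef
        have hP : 0 ≤ P := by positivity
        have hterm : ∀ k ∈ Finset.range m,
            a k / Real.sqrt ((m : ℝ) * τ - (k : ℝ) * τ) ≤
            P * (if (m : ℝ) * τ - (k : ℝ) * τ ≤ δ
                 then 1 / Real.sqrt ((m : ℝ) * τ - (k : ℝ) * τ)
                 else 1 / (L * Real.sqrt δ)) := by
          intro k hk
          have hk' : k < m := Finset.mem_range.mp hk
          have hkm : (k : ℝ) < m := Nat.cast_lt.mpr hk'
          have hd : 0 < (m : ℝ) * τ - (k : ℝ) * τ := by nlinarith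
          have hsd : 0 < Real.sqrt ((m : ℝ) * τ - (k : ℝ) * τ) := Real.sqrt_pos.mpr hd
          have hak : a k ≤ A * L ^ (f k) := ih k hk' (le_trans hk'.le hmM)
          have hak0 : 0 ≤ a k := ha k (le_trans hk'.le hmM)
          split_ifs with hnear
          · have hpow : L ^ (f k) ≤ L ^ (f m) :=
              pow_le_pow_right₀ hL1 (hfmono k m hk'.le)
            rw [mul_one_div]
            gcongr
            calc a k ≤ A * L ^ (f k) := hak
              _ ≤ P := by rw [hPdef]; exact mul_le_mul_of_nonneg_left hpow hA
          · push_neg at hnear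
            have hfk : f k + 1 ≤ f m := by
              have hx : ((k : ℝ) * τ) / δ + 1 ≤ ((m : ℝ) * τ) / δ := by
                rw [show ((k : ℝ) * τ) / δ + 1 = ((k : ℝ) * τ + δ) / δ by field_simp]
                gcongr
                linarith
              have hceil : f k + 1 = ⌈((k : ℝ) * τ) / δ + 1⌉₊ := by
                rw [hfdef]; exact (Nat.ceil_add_one (by positivity)).symm
              rw [hceil, hfdef]
              exact Nat.ceil_le_ceil hx
            have hpow : L * L ^ (f k) ≤ L ^ (f m) := by
              calc L * L ^ (f k) = L ^ (f k + 1) := by rw [pow_succ]; ring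
                _ ≤ L ^ (f m) := pow_le_pow_right₀ hL1 hfk
            have hsδd : Real.sqrt δ ≤ Real.sqrt ((m : ℝ) * τ - (k : ℝ) * τ) :=
              Real.sqrt_le_sqrt hnear.le
            have hsδ0 : 0 < Real.sqrt δ := Real.sqrt_pos.mpr hδ
            calc a k / Real.sqrt ((m : ℝ) * τ - (k : ℝ) * τ)
                ≤ (A * L ^ (f k)) / Real.sqrt ((m : ℝ) * τ - (k : ℝ) * τ) := by gcongr
              _ ≤ (A * L ^ (f k)) / Real.sqrt δ := by
                  gcongr
              _ ≤ P * (1 / (L * Real.sqrt δ)) := by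
                  rw [hPdef, mul_one_div, div_le_div_iff₀ hsδ0 (by positivity)]
                  nlinarith [mul_le_mul_of_nonneg_left hpow (mul_nonneg hA hsδ0.le)]
        have hsum0 := Finset.sum_le_sum hterm
        rw [← Finset.mul_sum] at hsum0
        have hrefl : ∑ k ∈ Finset.range m,
            (if (m : ℝ) * τ - (k : ℝ) * τ ≤ δ
             then 1 / Real.sqrt ((m : ℝ) * τ - (k : ℝ) * τ) else 0)
            = ∑ j ∈ Finset.range m,
            (if ((j : ℝ) + 1) * τ ≤ δ then 1 / Real.sqrt (((j : ℝ) + 1) * τ) else 0) := by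
          rw [← Finset.sum_range_reflect
            (fun j => if ((j : ℝ) + 1) * τ ≤ δ then 1 / Real.sqrt (((j : ℝ) + 1) * τ) else 0) m]
          apply Finset.sum_congr rfl
          intro j hj
          have hj' : j < m := Finset.mem_range.mp hj
          have hcast : ((m - 1 - j : ℕ) : ℝ) = (m : ℝ) - 1 - (j : ℝ) := by
            have h1 : m - 1 - j = m - (j + 1) := by omega
            rw [h1, Nat.cast_sub (by omega)]; push_cast; ring
          rw [hcast]
          have he2 : (m : ℝ) * τ - (j : ℝ) * τ = (((m : ℝ) - 1 - (j : ℝ)) + 1) * τ := by ring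
          rw [he2]
        have hSw : ∑ k ∈ Finset.range m,
            (if (m : ℝ) * τ - (k : ℝ) * τ ≤ δ
             then 1 / Real.sqrt ((m : ℝ) * τ - (k : ℝ) * τ)
             else 1 / (L * Real.sqrt δ))
            ≤ 2 * Real.sqrt δ / τ + (m : ℝ) * (1 / (L * Real.sqrt δ)) := by
          have hconst : (m : ℝ) * (1 / (L * Real.sqrt δ)) =
              ∑ _k ∈ Finset.range m, 1 / (L * Real.sqrt δ) := by
            rw [Finset.sum_const, Finset.card_range, nsmul_eq_mul]
          have h2 : ∑ k ∈ Finset.range m,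
              (if (m : ℝ) * τ - (k : ℝ) * τ ≤ δ
               then 1 / Real.sqrt ((m : ℝ) * τ - (k : ℝ) * τ) else 0)
              ≤ 2 * Real.sqrt δ / τ := by
            rw [hrefl]; exact aux_sqrt_sum τ δ hτ hδ m
          have h3 : ∑ k ∈ Finset.range m,
              (if (m : ℝ) * τ - (k : ℝ) * τ ≤ δ
               then 1 / Real.sqrt ((m : ℝ) * τ - (k : ℝ) * τ)
               else 1 / (L * Real.sqrt δ))
              ≤ ∑ k ∈ Finset.range m,
              ((if (m : ℝ) * τ - (k : ℝ) * τ ≤ δ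
               then 1 / Real.sqrt ((m : ℝ) * τ - (k : ℝ) * τ) else 0)
               + 1 / (L * Real.sqrt δ)) := by
            apply Finset.sum_le_sum
            intro k hk
            have hpos : (0:ℝ) ≤ 1 / (L * Real.sqrt δ) := by positivity
            split_ifs with h
            · linarith
            · simp
          calc _ ≤ _ := h3
            _ = (∑ k ∈ Finset.range m,
              (if (m : ℝ) * τ - (k : ℝ) * τ ≤ δ
               then 1 / Real.sqrt ((m : ℝ) * τ - (k : ℝ) * τ) else 0))
               + ∑ _k ∈ Finset.range m, 1 / (L * Real.sqrt δ) := Finset.sum_add_distrib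
            _ ≤ 2 * Real.sqrt δ / τ + (m : ℝ) * (1 / (L * Real.sqrt δ)) := by
                rw [← hconst]
                exact add_le_add_left h2 _
        have hτmT : τ * (m : ℝ) ≤ T := by
          have hmM' : (m : ℝ) ≤ M := Nat.cast_le.mpr hmM
          nlinarith
        have hcoef : C * τ * (2 * Real.sqrt δ / τ + (m : ℝ) * (1 / (L * Real.sqrt δ)))
            ≤ 3 / 4 := by
          rw [hsδ]
          have e1 : C * τ * (2 * (1 / (4 * C)) / τ + (m : ℝ) * (1 / (L * (1 / (4 * C)))))
              = 1 / 2 + 4 * C ^ 2 * (τ * (m : ℝ)) / L := by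
            field_simp
            ring
          rw [e1]
          have h4 : 4 * C ^ 2 * (τ * (m : ℝ)) / L ≤ 1 / 4 := by
            rw [div_le_iff₀ hL0]
            nlinarith [mul_le_mul_of_nonneg_left hτmT
              (le_of_lt (show (0:ℝ) < 4 * C ^ 2 by positivity))]
          linarith
        have hfm1 : 1 ≤ f m := by
          rw [hfdef]
          apply Nat.ceil_pos.mpr
          have : (0 : ℝ) < (m : ℝ) := by exact_mod_cast hm1
          positivity
        have hL4fm : 4 ≤ L ^ (f m) := by
          calc (4:ℝ) ≤ L := hL4
            _ = L ^ 1 := (pow_one L).symm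
            _ ≤ L ^ (f m) := pow_le_pow_right₀ hL1 hfm1
        have hCτ : (0:ℝ) ≤ C * τ := by positivity
        set S : ℝ := ∑ k ∈ Finset.range m, a k / Real.sqrt ((m : ℝ) * τ - (k : ℝ) * τ) with hSdef
        set W : ℝ := ∑ k ∈ Finset.range m,
            (if (m : ℝ) * τ - (k : ℝ) * τ ≤ δ
             then 1 / Real.sqrt ((m : ℝ) * τ - (k : ℝ) * τ)
             else 1 / (L * Real.sqrt δ)) with hWdef
        set B : ℝ := 2 * Real.sqrt δ / τ + (m : ℝ) * (1 / (L * Real.sqrt δ)) with hBdef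
        have c1 : C * τ * S ≤ C * τ * (P * W) := mul_le_mul_of_nonneg_left hsum0 hCτ
        have c2 : C * τ * (P * W) = (C * τ * P) * W := by ring
        have c3 : (C * τ * P) * W ≤ (C * τ * P) * B :=
          mul_le_mul_of_nonneg_left hSw (mul_nonneg hCτ hP)
        have c4 : (C * τ * P) * B = P * (C * τ * B) := by ring
        have c5 : P * (C * τ * B) ≤ P * (3 / 4) := mul_le_mul_of_nonneg_left hcoef hP
        have c6 : A * 4 ≤ A * L ^ (f m) := mul_le_mul_of_nonneg_left hL4fm hA
        clear_value P S W B
        rw [hPdef] at c1 c2 c3 c4 c5 ⊢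
        nlinarith [hrecm, c1, c2, c3, c4, c5, c6]
  intro m hm
  have hfN : f m ≤ ⌈T / δ⌉₊ := by
    rw [hfdef]
    apply Nat.ceil_le_ceil
    gcongr
    have hmM' : (m : ℝ) ≤ M := Nat.cast_le.mpr hm
    nlinarith
  calc a m ≤ A * L ^ (f m) := key m hm
    _ ≤ A * L ^ (⌈T / δ⌉₊) := by
        apply mul_le_mul_of_nonneg_left (pow_le_pow_right₀ hL1 hfN) hA
    _ = L ^ (⌈T / δ⌉₊) * A := by ring
end

section
/- (Pathwise positivity preservation of the Lie–Trotter splitting scheme.) Let N ≥ 2 and M ≥ 1 be integers, τ > 0 a real number, f : ℝ → ℝ an arbitrary function, and (w_{m,n})_{0 ≤ m ≤ M−1, 1 ≤ n ≤ N−1} arbitrary real numbers. Let u_0 ∈ ℝ^{N−1} have all entries nonnegative, and define recursively, for m = 0, …, M−1, the vector u_{m+1} = exp(τ N² D^N) · û_{m+1}, where û_{m+1} ∈ ℝ^{N−1} has entries û_{m+1,n} = exp(√N · f(u_{m,n}) · w_{m,n} − N f(u_{m,n})² τ / 2) · u_{m,n}. Then for every m ∈ {0, …, M} and every n ∈ {1,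 …, N−1}, one has u_{m,n} ≥ 0. -/
open NormedSpace

/-- Entrywise-nonnegative matrices have entrywise-nonnegative exponential. -/
theorem matrix_exp_entry_nonneg {k : ℕ} (A : Matrix (Fin k) (Fin k) ℝ)
    (hA : ∀ i j, 0 ≤ A i j) (i j : Fin k) : 0 ≤ exp A i j := by
  letI : SeminormedRing (Matrix (Fin k) (Fin k) ℝ) := Matrix.linftyOpSemiNormedRing
  letI : NormedRing (Matrix (Fin k) (Fin k) ℝ) := Matrix.linftyOpNormedRing
  letI : NormedAlgebra ℝ (Matrix (Fin k) (Fin k) ℝ) := Matrix.linftyOpNormedAlgebra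
  have h1 : HasSum (fun n : ℕ => ((Nat.factorial n : ℝ))⁻¹ • A ^ n) (exp A) :=
    exp_series_hasSum_exp' A
  have hpow : ∀ n : ℕ, ∀ a b : Fin k, 0 ≤ (A ^ n) a b := by
    intro n
    induction n with
    | zero =>
      intro a b
      simp only [pow_zero, Matrix.one_apply]
      split <;> norm_num
    | succ n ih =>
      intro a b
      rw [pow_succ, Matrix.mul_apply]
      exact Finset.sum_nonneg fun c _ => mul_nonneg (ih a c) (hA c b)
  have hcont : Continuous fun B : Matrix (Fin k) (Fin k) ℝ => B i j :=
    (continuous_apply j).comp (continuous_apply i)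
  have h2 : Filter.Tendsto
      (fun s : Finset ℕ => ∑ n ∈ s, ((Nat.factorial n : ℝ))⁻¹ * ((A ^ n) i j))
      Filter.atTop (nhds (exp A i j)) := by
    have h3 := (hcont.tendsto (exp A)).comp h1
    have heq : ∀ s : Finset ℕ,
        (∑ n ∈ s, ((Nat.factorial n : ℝ))⁻¹ • A ^ n) i j
          = ∑ n ∈ s, ((Nat.factorial n : ℝ))⁻¹ * (A ^ n) i j := by
      intro s
      rw [Matrix.sum_apply]
      simp [Matrix.smul_apply]
    simpa [Function.comp_def, heq] using h3
  refine ge_of_tendsto' h2 fun s => Finset.sum_nonneg fun n _ => ?_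
  exact mul_nonneg (by positivity) (hpow n i j)

/-- Entries of the exponential of `τ • N² • Dᴺ` are nonnegative. -/
theorem exp_tauDN_nonneg (N : ℕ) (τ : ℝ) (hτ : 0 < τ) (i j : Fin (N - 1)) :
    0 ≤ exp (τ • ((N : ℝ) ^ 2 • DN N)) i j := by
  set A : Matrix (Fin (N - 1)) (Fin (N - 1)) ℝ := τ • ((N : ℝ) ^ 2 • DN N) with hA
  set c : ℝ := 2 * (τ * (N : ℝ) ^ 2) with hc
  have hB : ∀ a b, 0 ≤ (A + c • (1 : Matrix (Fin (N - 1)) (Fin (N - 1)) ℝ)) a b := by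
    intro a b
    simp only [hA, Matrix.add_apply, Matrix.smul_apply, Matrix.one_apply, DN, smul_eq_mul]
    rcases eq_or_ne (a : ℕ) (b : ℕ) with h | h
    · have hab : a = b := Fin.ext h
      rw [if_pos h, if_pos hab]
      have : τ * ((N : ℝ) ^ 2 * (-2)) + c * 1 = 0 := by rw [hc]; ring
      linarith
    · have hab : a ≠ b := fun hh => h (by rw [hh])
      rw [if_neg h, if_neg hab, mul_zero, add_zero]
      split
      · positivity
      · simp
  have hcomm : Commute (A + c • (1 : Matrix (Fin (N - 1)) (Fin (N - 1)) ℝ))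
      ((-c) • (1 : Matrix (Fin (N - 1)) (Fin (N - 1)) ℝ)) :=
    (Commute.one_right _).smul_right (-c)
  have h2 : (-c) • (1 : Matrix (Fin (N - 1)) (Fin (N - 1)) ℝ) =
      Matrix.diagonal (fun _ => (-c : ℝ)) := by
    ext a b
    by_cases hab : a = b <;>
      simp [Matrix.smul_apply, Matrix.one_apply, Matrix.diagonal_apply, hab]
  have key : exp A =
      exp (A + c • (1 : Matrix (Fin (N - 1)) (Fin (N - 1)) ℝ)) *
        Matrix.diagonal (fun _ => Real.exp (-c)) := by
    have h1 : A = (A + c • (1 : Matrix (Fin (N - 1)) (Fin (N - 1)) ℝ)) + (-c) • 1 := by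
      rw [neg_smul]; abel
    conv_lhs => rw [h1]
    rw [Matrix.exp_add_of_commute _ _ hcomm]
    congr 1
    rw [h2, Matrix.exp_diagonal, Pi.exp_def]
    congr 1
    ext _
    rw [← Real.exp_eq_exp_ℝ]
  rw [show exp (τ • ((N : ℝ) ^ 2 • DN N)) = exp A from rfl, key, Matrix.mul_diagonal]
  exact mul_nonneg (matrix_exp_entry_nonneg _ hB i j) (Real.exp_pos _).le

/-- Pathwise positivity preservation of the Lie–Trotter splitting
scheme: with `N ≥ 2`, `M ≥ 1`, time step `τ > 0`, an arbitrary function `f : ℝ → ℝ`,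
arbitrary real increments `w_{m,n}`, and a nonnegative initial vector `u 0`, the
recursion
`u (m+1) = exp (τ N² Dᴺ) ⬝ (exp (√N f(u_{m,n}) w_{m,n} - N f(u_{m,n})² τ / 2) u_{m,n})ₙ`
produces vectors `u m` with all entries nonnegative, for every `m ∈ {0, …, M}`. -/
theorem lie_trotter_positivity (N M : ℕ) (hN : 2 ≤ N) (hM : 1 ≤ M)
    (τ : ℝ) (hτ : 0 < τ) (f : ℝ → ℝ)
    (w : ℕ → Fin (N - 1) → ℝ)
    (u : ℕ → Fin (N - 1) → ℝ)
    (h0 : ∀ n : Fin (N - 1), 0 ≤ u 0 n)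
    (hrec : ∀ m < M,
      u (m + 1) = (NormedSpace.exp (τ • ((N : ℝ) ^ 2 • DN N))).mulVec
        (fun n : Fin (N - 1) =>
          Real.exp (Real.sqrt N * f (u m n) * w m n - (N : ℝ) * f (u m n) ^ 2 * τ / 2) *
            u m n)) :
    ∀ m ≤ M, ∀ n : Fin (N - 1), 0 ≤ u m n := by
  intro m
  induction m with
  | zero => intro _ n; exact h0 n
  | succ m ih =>
    intro hm n
    have hmM : m < M := hm
    rw [hrec m hmM]
    simp only [Matrix.mulVec, dotProduct]
    refine Finset.sum_nonneg fun x _ => mul_nonneg (exp_tauDN_nonneg N τ hτ n x) ?_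
    exact mul_nonneg (Real.exp_pos _).le (ih (le_of_lt hmM) x)
end

section
/- (Pathwise positivity preservation of the Lie–Trotter splitting scheme for systems.) Let N ≥ 2 and M ≥ 1 be integers, τ > 0 a real number, f₁, f₂ : ℝ × ℝ → ℝ arbitrary functions, and (w¹_{m,n}), (w²_{m,n}) for 0 ≤ m ≤ M−1, 1 ≤ n ≤ N−1 arbitrary real numbers. Let u₁,₀, u₂,₀ ∈ ℝ^{N−1} have all entries nonnegative, and define recursively, for m = 0, …, M−1: u₁,_{m+1} = exp(τ N² D^N) · (exp(√N f₁(u₁,_{m,n}, u₂,_{m,n}) w¹_{m,n} − N f₁(u₁,_{m,n}, u₂,_{m,n})² τ/2) · u₁,_{m,n})_{1 ≤ n ≤ N−1} and u₂,_{m+1} = exp(τ N² D^N) · (exp(√N f₂(u₁,_{m,n}, u₂,_{m,n}) w²_{m,n} − N f₂(u₁,_{m,n}, u₂,_{m,n})² τ/2) · u₂,_{m,n})_{1 ≤ n ≤ N−1}. Then all entries of u₁,_m and u₂,_m are nonnegative for every m ∈ {0, …, M}. -/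
/-- Entrywise nonnegative square matrices have entrywise nonnegative exponential. -/
lemma exp_entries_nonneg {k : ℕ} (B : Matrix (Fin k) (Fin k) ℝ)
    (hB : ∀ i j, 0 ≤ B i j) (i j : Fin k) : 0 ≤ NormedSpace.exp B i j := by
  letI : SeminormedRing (Matrix (Fin k) (Fin k) ℝ) := Matrix.linftyOpSemiNormedRing
  letI : NormedRing (Matrix (Fin k) (Fin k) ℝ) := Matrix.linftyOpNormedRing
  letI : NormedAlgebra ℝ (Matrix (Fin k) (Fin k) ℝ) := Matrix.linftyOpNormedAlgebra
  have hpow : ∀ n : ℕ, ∀ i j, 0 ≤ (B ^ n) i j := by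
    intro n
    induction n with
    | zero => intro i j; rw [pow_zero]; by_cases h : i = j <;> simp [Matrix.one_apply, h]
    | succ n ih =>
      intro i j
      rw [pow_succ, Matrix.mul_apply]
      exact Finset.sum_nonneg fun l _ => mul_nonneg (ih i l) (hB l j)
  have hsum : HasSum (fun n : ℕ => ((n.factorial : ℝ))⁻¹ • B ^ n) (NormedSpace.exp B) := by
    rw [NormedSpace.exp_eq_tsum ℝ]
    exact (NormedSpace.expSeries_summable' B).hasSum
  have hentry : HasSum (fun n : ℕ => (((n.factorial : ℝ))⁻¹ • B ^ n) i j)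
      (NormedSpace.exp B i j) :=
    (Pi.hasSum.mp (Pi.hasSum.mp hsum i) j)
  have h0 : HasSum (fun _ : ℕ => (0:ℝ)) 0 := hasSum_zero
  refine hasSum_le (fun n => ?_) h0 hentry
  simp only [Matrix.smul_apply, smul_eq_mul]
  exact mul_nonneg (by positivity) (hpow n i j)

/-- The matrix `exp (τ • N² • Dᴺ)` has nonnegative entries. -/
lemma exp_heat_nonneg (N : ℕ) (τ : ℝ) (hτ : 0 ≤ τ) (i j : Fin (N - 1)) :
    0 ≤ NormedSpace.exp (τ • ((N : ℝ) ^ 2 • DN N)) i j := by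
  set c : ℝ := 2 * (τ * (N : ℝ) ^ 2) with hc
  set A : Matrix (Fin (N - 1)) (Fin (N - 1)) ℝ := τ • ((N : ℝ) ^ 2 • DN N) with hA
  set B : Matrix (Fin (N - 1)) (Fin (N - 1)) ℝ := A + c • (1 : Matrix _ _ ℝ) with hB
  have hBnn : ∀ i j, 0 ≤ B i j := by
    intro i j
    by_cases h : (i : ℕ) = (j : ℕ)
    · have hij : i = j := Fin.ext h
      subst hij
      simp [hB, hA, DN, Matrix.one_apply, hc]
      ring_nf
      nlinarith [sq_nonneg (N : ℝ), hτ]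
    · have hij : i ≠ j := fun hh => h (by rw [hh])
      simp only [hB, hA, Matrix.add_apply, Matrix.smul_apply, Matrix.one_apply_ne hij,
        smul_eq_mul, mul_zero, add_zero, DN, if_neg h]
      split
      · positivity
      · simp
  have hAeq : A = B + (-c) • (1 : Matrix _ _ ℝ) := by
    rw [hB]; simp [neg_smul]
  have hcomm : Commute B ((-c) • (1 : Matrix (Fin (N-1)) (Fin (N-1)) ℝ)) :=
    (Commute.one_right B).smul_right _
  rw [hAeq, Matrix.exp_add_of_commute _ _ hcomm]
  have hdiag : (-c) • (1 : Matrix (Fin (N-1)) (Fin (N-1)) ℝ) =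
      Matrix.diagonal (fun _ => -c) := Matrix.smul_one_eq_diagonal _
  rw [hdiag, Matrix.exp_diagonal, Matrix.mul_apply]
  refine Finset.sum_nonneg fun l _ => ?_
  rcases eq_or_ne l j with h | h
  · subst h
    simp only [Matrix.diagonal_apply_eq]
    refine mul_nonneg (exp_entries_nonneg B hBnn i l) ?_
    rw [Pi.exp_def, ← Real.exp_eq_exp_ℝ]
    exact Real.exp_nonneg _
  · simp [Matrix.diagonal_apply_ne _ h]

/-- Pathwise positivity preservation of the Lie–Trotter splitting
scheme for a system of two coupled stochastic heat equations: with `N ≥ 2`, `M ≥ 1`,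
time step `τ > 0`, arbitrary functions `f₁, f₂ : ℝ × ℝ → ℝ`, arbitrary real increments
`w¹_{m,n}`, `w²_{m,n}`, and nonnegative initial vectors `u₁ 0` and `u₂ 0`, the coupled
Lie–Trotter recursion produces vectors `u₁ m` and `u₂ m` with all entries nonnegative
for every `m ∈ {0, …, M}`. -/
theorem lie_trotter_positivity_system (N M : ℕ) (hN : 2 ≤ N) (hM : 1 ≤ M)
    (τ : ℝ) (hτ : 0 < τ) (f₁ f₂ : ℝ × ℝ → ℝ)
    (w₁ w₂ : ℕ → Fin (N - 1) → ℝ)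
    (u₁ u₂ : ℕ → Fin (N - 1) → ℝ)
    (h₁0 : ∀ n : Fin (N - 1), 0 ≤ u₁ 0 n)
    (h₂0 : ∀ n : Fin (N - 1), 0 ≤ u₂ 0 n)
    (hrec₁ : ∀ m < M,
      u₁ (m + 1) = (NormedSpace.exp (τ • ((N : ℝ) ^ 2 • DN N))).mulVec
        (fun n : Fin (N - 1) =>
          Real.exp (Real.sqrt N * f₁ (u₁ m n, u₂ m n) * w₁ m n -
              (N : ℝ) * f₁ (u₁ m n, u₂ m n) ^ 2 * τ / 2) * u₁ m n))
    (hrec₂ : ∀ m < M,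
      u₂ (m + 1) = (NormedSpace.exp (τ • ((N : ℝ) ^ 2 • DN N))).mulVec
        (fun n : Fin (N - 1) =>
          Real.exp (Real.sqrt N * f₂ (u₁ m n, u₂ m n) * w₂ m n -
              (N : ℝ) * f₂ (u₁ m n, u₂ m n) ^ 2 * τ / 2) * u₂ m n)) :
    ∀ m ≤ M, ∀ n : Fin (N - 1), 0 ≤ u₁ m n ∧ 0 ≤ u₂ m n := by
  intro m
  induction m with
  | zero => intro _ n; exact ⟨h₁0 n, h₂0 n⟩
  | succ m ih =>
    intro hm n
    have hmM : m < M := Nat.lt_of_succ_le hm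
    have hprev := ih (Nat.le_of_lt hmM)
    constructor
    · rw [hrec₁ m hmM]
      simp only [Matrix.mulVec, dotProduct]
      exact Finset.sum_nonneg fun l _ => mul_nonneg (exp_heat_nonneg N τ hτ.le n l)
        (mul_nonneg (Real.exp_nonneg _) (hprev l).1)
    · rw [hrec₂ m hmM]
      simp only [Matrix.mulVec, dotProduct]
      exact Finset.sum_nonneg fun l _ => mul_nonneg (exp_heat_nonneg N τ hτ.le n l)
        (mul_nonneg (Real.exp_nonneg _) (hprev l).2)
end
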